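/- If λ generates F_{2^n}^×, the automorphism ξ(a,b) = (λa, λ^{1+θ}b) generates a cyclic group of automorphisms of G = A(n,θ) acting regularly (simply transitively) on the set of nontrivial central elements of G. -/

import Mathlib

noncomputable section

abbrev Fq (n : ℕ) : Type := GaloisField 2 n

instance (n : ℕ) : Fintype (Fq n) := Fintype.ofFinite _

def ringAutEquivAlgAut (n : ℕ) : (Fq n ≃+* Fq n) ≃ (Fq n ≃ₐ[ZMod 2] Fq n) where
  toFun σ := AlgEquiv.ofRingEquiv (f := σ) (fun x => by
    have : (σ.toRingHom).comp (algebraMap (ZMod 2) (Fq n)) = algebraMap (ZMod 2) (Fq n) :=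
      Subsingleton.elim _ _
    exact RingHom.congr_fun this x)
  invFun σ := σ.toRingEquiv
  left_inv σ := by ext x; rfl
  right_inv σ := by ext x; rfl

theorem card_ringAut (n : ℕ) (hn : n ≠ 0) : Nat.card (Fq n ≃+* Fq n) = n := by
  rw [Nat.card_congr (ringAutEquivAlgAut n),
    IsGalois.card_aut_eq_finrank, GaloisField.finrank 2 hn]

instance (n : ℕ) : Finite (Fq n ≃+* Fq n) :=
  Finite.of_injective (fun σ => (σ : Fq n → Fq n)) DFunLike.coe_injective

theorem orderOf_theta (n : ℕ) (hn : n ≠ 0) (θ : Fq n ≃+* Fq n)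
    (hθ : ∀ σ : Fq n ≃+* Fq n, σ ∈ Subgroup.zpowers θ) : orderOf θ = n := by
  have : Fintype (Fq n ≃+* Fq n) := Fintype.ofFinite _
  rw [orderOf_eq_card_of_forall_mem_zpowers hθ]
  exact card_ringAut n hn

/-- fixed by θ² implies fixed by θ, when θ has odd order -/
theorem theta_sq_fix {n : ℕ} (hodd : Odd n) (θ : Fq n ≃+* Fq n)
    (hord : orderOf θ = n) {v : Fq n} (h2 : θ (θ v) = v) : θ v = v := by
  obtain ⟨m, hm⟩ := hodd
  have hθeq : (θ ^ 2) ^ (m + 1) = θ := by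
    rw [← pow_mul]
    have : 2 * (m + 1) = n + 1 := by omega
    rw [this]
    have h1 : θ ^ n = 1 := orderOf_dvd_iff_pow_eq_one.mp (by rw [hord])
    rw [pow_succ, h1, one_mul]
  have hfix : ∀ k : ℕ, ((θ ^ 2) ^ k) v = v := by
    intro k
    induction k with
    | zero => rfl
    | succ k ih =>
      rw [pow_succ]
      show ((θ ^ 2) ^ k) ((θ ^ 2) v) = v
      have : (θ ^ 2) v = v := by
        show (θ * θ) v = v
        exact h2
      rw [this, ih]
  calc θ v = ((θ ^ 2) ^ (m + 1)) v := by rw [hθeq]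
    _ = v := hfix (m + 1)

variable {n : ℕ}

def nrmHom (θ : Fq n ≃+* Fq n) : (Fq n)ˣ →* (Fq n)ˣ where
  toFun u := u * Units.map (θ : Fq n →* Fq n) u
  map_one' := by simp
  map_mul' a b := by simp [mul_mul_mul_comm]

theorem nrmHom_inj (hodd : Odd n) (θ : Fq n ≃+* Fq n) (hord : orderOf θ = n) :
    Function.Injective (nrmHom θ) := by
  rw [injective_iff_map_eq_one]
  intro u hu
  have hv : (u : Fq n) * θ (u : Fq n) = 1 := by
    have := congrArg (Units.val) hu
    simpa [nrmHom] using this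
  have hinv : θ (u : Fq n) = (u⁻¹ : (Fq n)ˣ) := by
    rw [Units.val_inv_eq_inv_val]
    exact eq_inv_of_mul_eq_one_left (by linear_combination hv)
  have h2 : θ (θ (u : Fq n)) = (u : Fq n) := by
    rw [hinv]
    have : θ ((u⁻¹ : (Fq n)ˣ) : Fq n) * θ (u : Fq n) = 1 := by
      rw [← map_mul]; simp
    rw [hinv] at this
    rw [Units.val_inv_eq_inv_val] at this ⊢
    exact (mul_inv_eq_one₀ u.ne_zero).mp this
  have hfixed := theta_sq_fix hodd θ hord h2
  have huu : (u : Fq n) * (u : Fq n) = 1 := by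
    rw [← hv, hfixed]
  have hchar : (2 : Fq n) = 0 := by
    have := CharP.cast_eq_zero (Fq n) 2
    exact_mod_cast this
  have hsq : ((u : Fq n) - 1) ^ 2 = 0 := by
    linear_combination huu + (1 - (u : Fq n)) * hchar
  have : (u : Fq n) = 1 :=
    sub_eq_zero.mp (pow_eq_zero_iff (n := 2) (by norm_num) |>.mp hsq)
  exact Units.ext this

theorem mu_generates (hodd : Odd n) (θ : Fq n ≃+* Fq n) (hord : orderOf θ = n)
    (lam : (Fq n)ˣ) (hlam : ∀ u : (Fq n)ˣ, u ∈ Subgroup.zpowers lam) :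
    ∀ w : (Fq n)ˣ, w ∈ Subgroup.zpowers (nrmHom θ lam) := by
  intro w
  have hsurj : Function.Surjective (nrmHom θ) :=
    Finite.surjective_of_injective (nrmHom_inj hodd θ hord)
  obtain ⟨u, hu⟩ := hsurj w
  obtain ⟨k, hk⟩ := Subgroup.mem_zpowers_iff.mp (hlam u)
  exact Subgroup.mem_zpowers_iff.mpr ⟨k, by rw [← map_zpow, hk, hu]⟩

theorem orderOf_mu (hn : n ≠ 0) (hodd : Odd n) (θ : Fq n ≃+* Fq n) (hord : orderOf θ = n)
    (lam : (Fq n)ˣ) (hlam : ∀ u : (Fq n)ˣ, u ∈ Subgroup.zpowers lam) :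
    orderOf (nrmHom θ lam) = 2 ^ n - 1 := by
  rw [orderOf_eq_card_of_forall_mem_zpowers (mu_generates hodd θ hord lam hlam)]
  have : Nat.card (Fq n) = 2 ^ n := GaloisField.card 2 n hn
  rw [Nat.card_units, this]

@[ext] structure SuzukiA (n : ℕ) (θ : Fq n ≃+* Fq n) where
  a : Fq n
  b : Fq n

namespace SuzukiA

variable {n : ℕ} {θ : Fq n ≃+* Fq n}

instance : Mul (SuzukiA n θ) := ⟨fun x y => ⟨x.a + y.a, x.b + y.b + x.a * θ y.a⟩⟩
instance : One (SuzukiA n θ) := ⟨⟨0, 0⟩⟩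
instance : Inv (SuzukiA n θ) := ⟨fun x => ⟨x.a, x.b + x.a * θ x.a⟩⟩

theorem mul_def (x y : SuzukiA n θ) :
    x * y = ⟨x.a + y.a, x.b + y.b + x.a * θ y.a⟩ := rfl

@[simp] theorem one_a : (1 : SuzukiA n θ).a = 0 := rfl
@[simp] theorem one_b : (1 : SuzukiA n θ).b = 0 := rfl

instance : Group (SuzukiA n θ) where
  mul_assoc x y z := by ext <;> simp [mul_def, map_add] <;> ring
  one_mul x := by ext <;> simp [mul_def]
  mul_one x := by ext <;> simp [mul_def]
  inv_mul_cancel x := by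
    have h2 : (2 : Fq n) = 0 := by
      have := CharP.cast_eq_zero (Fq n) 2
      exact_mod_cast this
    show (⟨x.a, x.b + x.a * θ x.a⟩ * x : SuzukiA n θ) = 1
    ext
    · show x.a + x.a = 0
      linear_combination x.a * h2
    · show x.b + x.a * θ x.a + x.b + x.a * θ x.a = 0
      linear_combination (x.b + x.a * θ x.a) * h2

instance : Fintype (SuzukiA n θ) :=
  Fintype.ofEquiv (Fq n × Fq n)
    { toFun := fun p => ⟨p.1, p.2⟩
      invFun := fun x => (x.a, x.b)
      left_inv := fun _ => rfl
      right_inv := fun _ => rfl }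

end SuzukiA

open SuzukiA in
theorem stmt6 (n : ℕ) (hn : 1 < n) (hodd : Odd n) (θ : Fq n ≃+* Fq n)
    (hθ : ∀ σ : Fq n ≃+* Fq n, σ ∈ Subgroup.zpowers θ)
    (lam : (Fq n)ˣ) (hlam : ∀ u : (Fq n)ˣ, u ∈ Subgroup.zpowers lam) :
    ∃ ξ : SuzukiA n θ ≃* SuzukiA n θ,
      (∀ x : SuzukiA n θ,
        ξ x = ⟨(lam : Fq n) * x.a, (lam : Fq n) * θ (lam : Fq n) * x.b⟩) ∧
      ∀ y z : SuzukiA n θ,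
        y ∈ Subgroup.center (SuzukiA n θ) → y ≠ 1 →
        z ∈ Subgroup.center (SuzukiA n θ) → z ≠ 1 →
        ∃! k : ℕ, k < 2 ^ n - 1 ∧ (ξ ^ k) y = z := by
  have hn0 : n ≠ 0 := by omega
  have hord : orderOf θ = n := orderOf_theta n hn0 θ hθ
  set L : Fq n := (lam : Fq n) with hL
  set μ : (Fq n)ˣ := nrmHom θ lam with hμ
  have hMval : (μ : Fq n) = L * θ L := rfl
  have hordμ : orderOf μ = 2 ^ n - 1 := orderOf_mu hn0 hodd θ hord lam hlam
  -- the automorphism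
  refine ⟨MulEquiv.mk ⟨fun x => ⟨L * x.a, (μ : Fq n) * x.b⟩,
      fun x => ⟨((lam⁻¹ : (Fq n)ˣ) : Fq n) * x.a, ((μ⁻¹ : (Fq n)ˣ) : Fq n) * x.b⟩,
      ?_, ?_⟩ ?_, ?_, ?_⟩
  · intro x
    ext <;> field_simp <;> simp [hL]
  · intro x
    ext <;> field_simp <;> simp [hL]
  · intro x y
    ext <;> simp [mul_def, hMval, map_mul] <;> ring
  · intro x
    show (⟨L * x.a, (μ : Fq n) * x.b⟩ : SuzukiA n θ) = _
    rw [hMval]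
  · intro y z hy hy1 hz hz1
    -- θ is not the identity
    have hθne : ∃ c : Fq n, θ c ≠ c := by
      by_contra h
      push_neg at h
      have : θ = 1 := RingEquiv.ext h
      rw [this, orderOf_one] at hord
      omega
    -- characterization of nontrivial central elements
    have hcent : ∀ w : SuzukiA n θ, w ∈ Subgroup.center (SuzukiA n θ) → w ≠ 1 →
        w.a = 0 ∧ w.b ≠ 0 := by
      intro w hw hw1
      have key := Subgroup.mem_center_iff.mp hw
      have ha : w.a = 0 := by
        by_contra hwa
        have hcomm : ∀ c : Fq n, c * θ w.a = w.a * θ c := by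
          intro c
          have := key ⟨c, 0⟩
          have hb := congrArg SuzukiA.b this
          simpa [mul_def] using hb
        have h1 : θ w.a = w.a := by simpa using hcomm 1
        obtain ⟨c, hc⟩ := hθne
        apply hc
        have hthis := hcomm c
        rw [h1] at hthis
        have h3 : w.a * θ c = w.a * c := by linear_combination -hthis
        exact mul_left_cancel₀ hwa h3
      refine ⟨ha, fun hb => hw1 ?_⟩
      ext
      · simp [ha]
      · simp [hb]
    obtain ⟨hya, hyb⟩ := hcent y hy hy1
    obtain ⟨hza, hzb⟩ := hcent z hz hz1
    -- power action
    have hpow : ∀ (ξ' : SuzukiA n θ ≃* SuzukiA n θ),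
        (∀ x, ξ' x = ⟨L * x.a, (μ : Fq n) * x.b⟩) →
        ∀ (k : ℕ) (x : SuzukiA n θ),
          (ξ' ^ k) x = ⟨L ^ k * x.a, ((μ : Fq n)) ^ k * x.b⟩ := by
      intro ξ' hξ' k
      induction k with
      | zero => intro x; ext <;> simp
      | succ k ih =>
        intro x
        rw [pow_succ']
        show ξ' ((ξ' ^ k) x) = _
        rw [ih, hξ']
        ext <;> simp <;> ring
    set N := 2 ^ n - 1 with hN
    have hNpos : 0 < N := by
      have : 2 ^ 1 ≤ 2 ^ n := Nat.pow_le_pow_right (by norm_num) (by omega)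
      omega
    -- units
    set b' : (Fq n)ˣ := Units.mk0 y.b hyb with hb'
    set c' : (Fq n)ˣ := Units.mk0 z.b hzb with hc'
    obtain ⟨j, hj⟩ := Subgroup.mem_zpowers_iff.mp
      (mu_generates hodd θ hord lam hlam (c' * b'⁻¹))
    set k : ℕ := (j % (N : ℤ)).toNat with hk
    have hjm0 : 0 ≤ j % (N : ℤ) := Int.emod_nonneg j (by exact_mod_cast hNpos.ne')
    have hjml : j % (N : ℤ) < N := Int.emod_lt_of_pos j (by exact_mod_cast hNpos)
    have hkN : k < N := by omega
    have hμk : μ ^ k = c' * b'⁻¹ := by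
      have : μ ^ (k : ℤ) = μ ^ j := by
        rw [hk, Int.toNat_of_nonneg hjm0, ← hordμ]
        exact zpow_mod_orderOf μ j
      rw [zpow_natCast] at this
      rw [this, hj]
    have hbeq2 : (μ : Fq n) ^ k * y.b = z.b := by
      have hval := congrArg Units.val hμk
      rw [Units.val_pow_eq_pow_val] at hval
      rw [hval, Units.val_mul, Units.val_inv_eq_inv_val]
      show z.b * (y.b)⁻¹ * y.b = z.b
      field_simp
    refine ⟨k, ⟨hkN, ?_⟩, ?_⟩
    · rw [hpow _ (fun x => rfl) k y]
      ext
      · simp [hya, hza]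
      · show (μ : Fq n) ^ k * y.b = z.b
        exact hbeq2
    · rintro k' ⟨hk'N, hk'⟩
      rw [hpow _ (fun x => rfl) k' y] at hk'
      have hbeq : (μ : Fq n) ^ k' * y.b = z.b := congrArg SuzukiA.b hk'
      have : (μ : Fq n) ^ k' = (μ : Fq n) ^ k :=
        mul_right_cancel₀ hyb (by rw [hbeq, hbeq2])
      have hμeq : μ ^ k' = μ ^ k := Units.ext (by
        rw [Units.val_pow_eq_pow_val, Units.val_pow_eq_pow_val]; exact this)
      exact pow_injOn_Iio_orderOf (by simpa [hordμ] using hk'N)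
        (by simpa [hordμ] using hkN) hμeq
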